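/- For every β > 0, the ratio D(2n)/D(n) converges to 1 as n → ∞, where D(n) = L1(n+1, 1/n)·L3(n+1, 1/n) − L2(n+1, 1/n)² is the determinant of the Fisher information matrix corresponding to the equidistant design ξ_n = {0, 1/n, 2/n, …, 1} on [0,1]. -/

import Mathlib

open Real Filter

/-- Entry `L1` of the Fisher information matrix for an equidistant design with
`n` points and step size `d`, covariance parameter `β`. -/
noncomputable def L1 (β : ℝ) (n : ℕ) (d : ℝ) : ℝ :=
  (2 - (n : ℝ) + n * exp (β * d)) / (exp (β * d) + 1)

/-- Entry `L2` of the Fisher information matrix. -/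
noncomputable def L2 (β : ℝ) (n : ℕ) (d : ℝ) : ℝ :=
  d * ((n : ℝ) - 1) / 2 * L1 β n d

/-- Entry `L3` of the Fisher information matrix. -/
noncomputable def L3 (β : ℝ) (n : ℕ) (d : ℝ) : ℝ :=
  d ^ 2 * ((n : ℝ) - 1) / (exp (2 * β * d) - 1) *
    ((n : ℝ) * (2 * n - 1) * (exp (β * d) - 1) ^ 2 / 6 + n * (exp (β * d) - 1) + 1)
/-- Determinant of the Fisher information matrix for the equidistant design
`ξ_n = {0, 1/n, …, 1}` on `[0,1]` (that is, `n+1` points with step `1/n`). -/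
noncomputable def Dn (β : ℝ) (n : ℕ) : ℝ :=
  L1 β (n + 1) (1 / n) * L3 β (n + 1) (1 / n) - L2 β (n + 1) (1 / n) ^ 2

lemma tendsto_mul_exp_sub_one (c : ℝ) :
    Tendsto (fun n : ℕ => (n : ℝ) * (exp (c / n) - 1)) atTop (nhds c) := by
  have hd : HasDerivAt (fun t : ℝ => exp (c * t)) c 0 := by
    have := ((hasDerivAt_id (0 : ℝ)).const_mul c).exp
    simpa using this
  have hs := hasDerivAt_iff_tendsto_slope.mp hd
  have h1 : Tendsto (fun n : ℕ => (1 : ℝ) / n) atTop (nhdsWithin 0 {(0 : ℝ)}ᶜ) := by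
    apply tendsto_nhdsWithin_of_tendsto_nhds_of_eventually_within _
      tendsto_one_div_atTop_nhds_zero_nat
    filter_upwards [eventually_gt_atTop 0] with n hn
    simp only [Set.mem_compl_iff, Set.mem_singleton_iff]
    exact one_div_ne_zero (Nat.cast_ne_zero.mpr hn.ne')
  have h2 := hs.comp h1
  refine h2.congr' ?_
  filter_upwards [eventually_gt_atTop 0] with n hn
  have hn' : (n : ℝ) ≠ 0 := Nat.cast_ne_zero.mpr hn.ne'
  simp only [Function.comp, slope_def_field, mul_one_div]
  rw [mul_zero, Real.exp_zero, sub_zero]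
  field_simp

lemma tendsto_exp_div (c : ℝ) :
    Tendsto (fun n : ℕ => exp (c / n)) atTop (nhds 1) := by
  have h0 : Tendsto (fun n : ℕ => c / (n : ℝ)) atTop (nhds 0) := by
    simpa [div_eq_mul_inv, mul_comm] using
      (tendsto_one_div_atTop_nhds_zero_nat.const_mul c)
  simpa [Function.comp_def] using (Real.continuous_exp.tendsto 0).comp h0

/-- Doubling the number of sub-intervals of a fixed design interval has
asymptotically no effect on the determinant: `D(2n)/D(n) → 1`. -/
theorem D_double_ratio_tendsto_one (β : ℝ) (hβ : 0 < β) :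
    Tendsto (fun n : ℕ => Dn β (2 * n) / Dn β n) atTop (nhds 1) := by
  have hβ' : (β : ℝ) ≠ 0 := hβ.ne'
  set L : ℝ := (β + 2) / 2 * ((β ^ 2 / 3 + β + 1) / (2 * β)) - ((β + 2) / 4) ^ 2 with hLdef
  have hL : 0 < L := by
    have hEq : L = (β + 2) * (β ^ 2 + 6 * β + 12) / (48 * β) := by
      rw [hLdef]; field_simp; ring
    rw [hEq]
    apply div_pos
    · nlinarith [sq_nonneg β]
    · linarith
  have he := tendsto_exp_div β
  have ha := tendsto_mul_exp_sub_one β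
  have hb := tendsto_mul_exp_sub_one (2 * β)
  -- L1 limit
  have h1 : Tendsto (fun n : ℕ => L1 β (n + 1) (1 / n)) atTop (nhds ((β + 2) / 2)) := by
    have num : Tendsto (fun n : ℕ => (n : ℝ) * (exp (β / n) - 1) + (exp (β / n) - 1) + 2)
        atTop (nhds (β + 2)) := by
      have := (ha.add ((he.sub_const 1))).add_const 2
      simpa using this
    have den : Tendsto (fun n : ℕ => exp (β / n) + 1) atTop (nhds 2) := by
      rw [show (2 : ℝ) = 1 + 1 by norm_num]
      exact he.add_const 1
    have h := num.div den (by norm_num)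
    refine h.congr fun n => ?_
    simp only [Pi.div_apply]
    unfold L1
    rw [mul_one_div]
    push_cast
    congr 1
    ring
  -- L2 limit
  have h2 : Tendsto (fun n : ℕ => L2 β (n + 1) (1 / n)) atTop (nhds ((β + 2) / 4)) := by
    have h := h1.div_const 2
    have : (β + 2) / 2 / 2 = (β + 2) / 4 := by ring
    rw [this] at h
    refine h.congr' ?_
    filter_upwards [eventually_gt_atTop 0] with n hn
    have hn' : (n : ℝ) ≠ 0 := Nat.cast_ne_zero.mpr hn.ne'
    unfold L2
    push_cast
    field_simp
    ring
  -- L3 limit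
  have h3 : Tendsto (fun n : ℕ => L3 β (n + 1) (1 / n)) atTop
      (nhds ((β ^ 2 / 3 + β + 1) / (2 * β))) := by
    have pre : Tendsto (fun n : ℕ => ((n : ℝ) * (exp (2 * β / n) - 1))⁻¹)
        atTop (nhds ((2 * β)⁻¹)) := hb.inv₀ (by positivity)
    have pβ : Tendsto (fun n : ℕ => (n : ℝ) * (exp (β / n) - 1) + (exp (β / n) - 1))
        atTop (nhds β) := by
      have := ha.add (he.sub_const 1)
      simpa using this
    have q : Tendsto (fun n : ℕ => 2 * ((n : ℝ) * (exp (β / n) - 1)) + (exp (β / n) - 1))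
        atTop (nhds (2 * β)) := by
      have := (ha.const_mul 2).add (he.sub_const 1)
      simpa using this
    have inner : Tendsto (fun n : ℕ =>
        ((n : ℝ) * (exp (β / n) - 1) + (exp (β / n) - 1)) *
          (2 * ((n : ℝ) * (exp (β / n) - 1)) + (exp (β / n) - 1)) / 6 +
        ((n : ℝ) * (exp (β / n) - 1) + (exp (β / n) - 1)) + 1)
        atTop (nhds (β ^ 2 / 3 + β + 1)) := by
      have := (((pβ.mul q).div_const 6).add pβ).add_const 1
      have hval : β * (2 * β) / 6 + β + 1 = β ^ 2 / 3 + β + 1 := by ring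
      rw [hval] at this
      exact this
    have h := pre.mul inner
    have hval2 : (2 * β)⁻¹ * (β ^ 2 / 3 + β + 1) = (β ^ 2 / 3 + β + 1) / (2 * β) := by
      ring
    rw [hval2] at h
    refine h.congr' ?_
    filter_upwards [eventually_gt_atTop 0] with n hn
    have hn' : (n : ℝ) ≠ 0 := Nat.cast_ne_zero.mpr hn.ne'
    have hnpos : (0 : ℝ) < n := by exact_mod_cast hn
    have hX : exp (2 * β / (n : ℝ)) - 1 ≠ 0 := by
      have h1 : (1 : ℝ) < exp (2 * β / n) := Real.one_lt_exp_iff.mpr (by positivity)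
      linarith
    unfold L3
    rw [mul_one_div, mul_one_div]
    push_cast
    field_simp [hn', hX]
    ring
  -- combine
  have hD : Tendsto (fun n : ℕ => Dn β n) atTop (nhds L) := by
    rw [hLdef]
    exact (h1.mul h3).sub (h2.pow 2)
  have h2n : Tendsto (fun n : ℕ => 2 * n) atTop atTop :=
    tendsto_atTop_atTop_of_monotone (fun a b h => by omega) (fun b => ⟨b, by omega⟩)
  have hD2 : Tendsto (fun n : ℕ => Dn β (2 * n)) atTop (nhds L) := hD.comp h2n
  have := hD2.div hD hL.ne'
  simpa [div_self hL.ne', Pi.div_def] using this
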